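/- arXiv:1303.6322 — 3 statements merged into one kernel-verified Lean document; each statement's English description precedes it below -/
import Mathlib

section
/- For n ≥ 3, ζ = 2π/n, and k, l ∈ {2, ..., n-2} ∪ {n}, the vectors T_k(z) = (0, n^{-1/2} e^{(ikI+J)ζ} z, ..., n^{-1/2} e^{n(ikI+J)ζ} z) in ℂ^{2(n+1)} satisfy ⟨T_k(z_k), T_l(z_l)⟩ = δ_{kl} ⟨z_k, z_l⟩, where ⟨·,·⟩ is the Hermitian inner product. -/
open Finset

/-- The rotation matrix `e^{Jθ}` viewed over ℂ. -/
noncomputable def rotC (θ : ℝ) : Matrix (Fin 2) (Fin 2) ℂ :=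
  !![(Real.cos θ : ℂ), (-Real.sin θ : ℂ); (Real.sin θ : ℂ), (Real.cos θ : ℂ)]

/-- `T_k(z) ∈ ℂ^{2(n+1)}`, with zero-th 2-block equal to `0` and `j`-th 2-block equal to
`n^{-1/2} e^{j(ikI+J)ζ} z = n^{-1/2} e^{ijkζ} e^{Jjζ} z` for `j = 1, ..., n`, where `ζ = 2π/n`. -/
noncomputable def Tmap (n k : ℕ) (z : Fin 2 → ℂ) : Fin (n + 1) → Fin 2 → ℂ :=
  fun j =>
    if (j : ℕ) = 0 then 0
    else ((Real.sqrt n)⁻¹ : ℂ) •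
      (Complex.exp (Complex.I * k * j * (2 * Real.pi / n)) •
        (rotC ((j : ℕ) * (2 * Real.pi / n))).mulVec z)

/-- The rotation `rotC θ` preserves the Hermitian inner product on `ℂ²`. -/
lemma rot_inner (θ : ℝ) (z w : Fin 2 → ℂ) :
    ∑ a : Fin 2, (starRingEnd ℂ) ((rotC θ).mulVec z a) * ((rotC θ).mulVec w a)
      = ∑ a : Fin 2, (starRingEnd ℂ) (z a) * w a := by
  have h : ((Real.cos θ : ℂ))^2 + ((Real.sin θ : ℂ))^2 = 1 := by
    exact_mod_cast congrArg (Complex.ofReal) (Real.cos_sq_add_sin_sq θ)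
  simp [rotC, Matrix.mulVec, dotProduct, Fin.sum_univ_two, map_add, map_mul, map_neg,
    Complex.conj_ofReal, -Complex.ofReal_cos, -Complex.ofReal_sin]
  linear_combination ((starRingEnd ℂ) (z 0) * w 0 + (starRingEnd ℂ) (z 1) * w 1) * h

/-- The `j`-th block contribution to the inner product, for `j ≠ 0`. -/
lemma term_eq (n k l : ℕ) (hn : 3 ≤ n) (z w : Fin 2 → ℂ) (j : Fin (n+1)) (hj : (j:ℕ) ≠ 0) :
    ∑ a : Fin 2, (starRingEnd ℂ) (Tmap n k z j a) * Tmap n l w j a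
      = (n : ℂ)⁻¹ * (Complex.exp (Complex.I * ((l:ℂ) - (k:ℂ)) * (2 * Real.pi / n)))^(j:ℕ)
          * ∑ a : Fin 2, (starRingEnd ℂ) (z a) * w a := by
  have hn0 : (0:ℝ) < n := by positivity
  have hc : ((Real.sqrt n : ℂ))⁻¹ * ((Real.sqrt n : ℂ))⁻¹ = (n : ℂ)⁻¹ := by
    rw [← mul_inv, ← Complex.ofReal_mul, Real.mul_self_sqrt hn0.le]; push_cast; ring
  have hconj : (starRingEnd ℂ) (Complex.exp (Complex.I * k * j * (2 * Real.pi / n)))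
      = Complex.exp (-(Complex.I * k * j * (2 * Real.pi / n))) := by
    rw [← Complex.exp_conj]
    congr 1
    simp only [map_mul, map_div₀, Complex.conj_I, Complex.conj_ofReal, map_ofNat,
      Complex.conj_natCast]
    ring
  have hexp : Complex.exp (-(Complex.I * k * j * (2 * Real.pi / n)))
        * Complex.exp (Complex.I * l * j * (2 * Real.pi / n))
      = (Complex.exp (Complex.I * ((l:ℂ) - (k:ℂ)) * (2 * Real.pi / n)))^(j:ℕ) := by
    rw [← Complex.exp_nat_mul, ← Complex.exp_add]
    congr 1
    have : ((j : Fin (n+1)) : ℂ) = ((j:ℕ) : ℂ) := rfl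
    rw [this]; ring
  simp only [Tmap, if_neg hj, Pi.smul_apply, smul_eq_mul, map_mul, map_inv₀,
    Complex.conj_ofReal, hconj]
  calc ∑ x : Fin 2, ((Real.sqrt n:ℂ))⁻¹ *
          (Complex.exp (-(Complex.I * k * j * (2 * Real.pi / n))) *
            (starRingEnd ℂ) ((rotC ((j:ℕ) * (2 * Real.pi / n))).mulVec z x)) *
        (((Real.sqrt n:ℂ))⁻¹ *
          (Complex.exp (Complex.I * l * j * (2 * Real.pi / n)) *
            (rotC ((j:ℕ) * (2 * Real.pi / n))).mulVec w x))
      = ((Real.sqrt n:ℂ))⁻¹ * ((Real.sqrt n:ℂ))⁻¹ *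
          (Complex.exp (-(Complex.I * k * j * (2 * Real.pi / n))) *
            Complex.exp (Complex.I * l * j * (2 * Real.pi / n))) *
          ∑ x : Fin 2, (starRingEnd ℂ) ((rotC ((j:ℕ) * (2 * Real.pi / n))).mulVec z x) *
            ((rotC ((j:ℕ) * (2 * Real.pi / n))).mulVec w x) := by
        rw [Finset.mul_sum]; exact Finset.sum_congr rfl fun x _ => by ring
    _ = _ := by rw [hc, hexp, rot_inner]

theorem stmt5 (n : ℕ) (hn : 3 ≤ n) (k l : ℕ)
    (hk : k ∈ Finset.Icc 2 (n - 2) ∪ {n}) (hl : l ∈ Finset.Icc 2 (n - 2) ∪ {n})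
    (z w : Fin 2 → ℂ) :
    ∑ j : Fin (n + 1), ∑ a : Fin 2, (starRingEnd ℂ) (Tmap n k z j a) * Tmap n l w j a
      = (if k = l then 1 else 0) * ∑ a : Fin 2, (starRingEnd ℂ) (z a) * w a := by
  simp only [Finset.mem_union, Finset.mem_Icc, Finset.mem_singleton] at hk hl
  have hkb : 2 ≤ k ∧ k ≤ n := by omega
  have hlb : 2 ≤ l ∧ l ≤ n := by omega
  have hnC : (n : ℂ) ≠ 0 := Nat.cast_ne_zero.mpr (by omega)
  set ω : ℂ := Complex.exp (Complex.I * ((l:ℂ) - (k:ℂ)) * (2 * Real.pi / n)) with hω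
  set S : ℂ := ∑ a : Fin 2, (starRingEnd ℂ) (z a) * w a with hS
  have hstep : ∑ j : Fin (n + 1), ∑ a : Fin 2,
      (starRingEnd ℂ) (Tmap n k z j a) * Tmap n l w j a
      = ∑ j ∈ Finset.range (n+1), (if j = 0 then 0 else (n : ℂ)⁻¹ * ω ^ j * S) := by
    rw [← Fin.sum_univ_eq_sum_range (fun j => if j = 0 then (0:ℂ) else (n : ℂ)⁻¹ * ω ^ j * S)]
    refine Finset.sum_congr rfl fun j _ => ?_
    by_cases hj : (j : ℕ) = 0
    · simp [Tmap, hj]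
    · rw [if_neg hj]; exact term_eq n k l hn z w j hj
  rw [hstep, Finset.sum_range_succ', if_pos rfl, add_zero]
  have : ∀ i ∈ Finset.range n, (if i + 1 = 0 then (0:ℂ) else (n : ℂ)⁻¹ * ω ^ (i+1) * S)
      = ((n : ℂ)⁻¹ * ω * S) * ω ^ i := by
    intro i _; rw [if_neg (Nat.succ_ne_zero i)]; ring
  rw [Finset.sum_congr rfl this, ← Finset.mul_sum]
  by_cases hkl : k = l
  · subst hkl
    have : ω = 1 := by rw [hω]; norm_num
    simp [this, mul_comm, hnC]
  · rw [if_neg hkl]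
    have hωn : ω ^ n = 1 := by
      rw [hω, ← Complex.exp_nat_mul]
      have : (n:ℂ) * (Complex.I * ((l:ℂ) - (k:ℂ)) * (2 * Real.pi / n))
          = (((l:ℤ) - (k:ℤ) : ℤ) : ℂ) * (2 * Real.pi * Complex.I) := by
        push_cast; field_simp
      rw [this, Complex.exp_int_mul_two_pi_mul_I]
    have hω1 : ω ≠ 1 := by
      intro h
      rw [hω, Complex.exp_eq_one_iff] at h
      obtain ⟨m, hm⟩ := h
      have hI : Complex.I * (((l:ℂ) - (k:ℂ)) * (2 * Real.pi / n))
          = Complex.I * ((m:ℂ) * (2 * Real.pi)) := by linear_combination hm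
      have h2 : ((l:ℂ) - (k:ℂ)) * (2 * Real.pi / n) = (m:ℂ) * (2 * Real.pi) :=
        mul_left_cancel₀ Complex.I_ne_zero hI
      have h3 : (((((l:ℝ) - k) * (2 * Real.pi / n)) : ℝ) : ℂ)
          = ((((m:ℝ) * (2 * Real.pi)) : ℝ) : ℂ) := by push_cast; linear_combination h2
      have h4 : ((l:ℝ) - k) * (2 * Real.pi / n) = (m:ℝ) * (2 * Real.pi) :=
        Complex.ofReal_injective h3
      have hπ : (0:ℝ) < Real.pi := Real.pi_pos
      have hnR : (0:ℝ) < n := by positivity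
      have h5 : ((l:ℝ) - k) = (m:ℝ) * n := by
        field_simp at h4
        nlinarith [h4]
      have h6 : (l:ℤ) - k = m * n := by exact_mod_cast h5
      rcases lt_trichotomy m 0 with hm' | hm' | hm'
      · have : m * (n:ℤ) ≤ -n := by nlinarith
        omega
      · subst hm'; simp at h6; omega
      · have : (n:ℤ) ≤ m * n := by nlinarith
        omega
    rw [geom_sum_eq hω1, hωn]
    simp
end

section
/- For n ≥ 3, ζ = 2π/n, α ≥ 1, and a_j = e^{ijζ} for j = 1,...,n with a_0 = 0, the configuration (a_0, ..., a_n) is a critical point of the potential V(x) = ω(xᵀℳx)/2 + Σ_{i<j} μ_i μ_j φ_α(‖x_j - x_i‖), where μ_0 = μ, μ_j = 1 for j ≥ 1, and φ_α'(r) = -1/r^α, provided ω = μ + s₁ with s₁ = 2^{-α} Σ_{j=1}^{n-1} sin^{-(α-1)}(jζ/2). Equivalently, for each j ∈ {1,...,n}: ω a_j - Σ_{i=0, i≠j}^n μ_i (a_j - a_i)/‖a_j - a_i‖^{α+1} = 0, and Σ_{i=1}^n a_i/‖a_i‖^{α+1} = 0. -/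
open Finset

noncomputable def Eθ (θ : ℝ) : ℂ := Complex.exp ((θ : ℂ) * Complex.I)

lemma Eθ_norm (θ : ℝ) : ‖Eθ θ‖ = 1 := Complex.norm_exp_ofReal_mul_I θ

lemma Eθ_add (θ φ : ℝ) : Eθ (θ + φ) = Eθ θ * Eθ φ := by
  rw [Eθ, Eθ, Eθ, ← Complex.exp_add]; push_cast; ring_nf

lemma Eθ_nat_mul (k : ℕ) (θ : ℝ) : Eθ (k * θ) = Eθ θ ^ k := by
  rw [Eθ, Eθ, ← Complex.exp_nat_mul]; congr 1; push_cast; ring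

lemma one_sub_Eθ (θ : ℝ) :
    1 - Eθ θ = ((1 - Real.cos θ : ℝ) : ℂ) + ((-Real.sin θ : ℝ) : ℂ) * Complex.I := by
  rw [Eθ, Complex.exp_mul_I, ← Complex.ofReal_cos, ← Complex.ofReal_sin]; push_cast; ring

lemma two_sin_sq' (θ : ℝ) : 1 - Real.cos θ = 2 * Real.sin (θ / 2) ^ 2 := by
  have h := Real.cos_two_mul (θ / 2)
  have h' : 2 * (θ / 2) = θ := by ring
  rw [h'] at h
  have h2 := Real.sin_sq_add_cos_sq (θ / 2)
  nlinarith

lemma norm_one_sub_Eθ (θ : ℝ) (h0 : 0 ≤ Real.sin (θ / 2)) :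
    ‖1 - Eθ θ‖ = 2 * Real.sin (θ / 2) := by
  rw [one_sub_Eθ, Complex.norm_def, Complex.normSq_add_mul_I]
  have key : (1 - Real.cos θ) ^ 2 + (-Real.sin θ) ^ 2 = (2 * Real.sin (θ / 2)) ^ 2 := by
    have h1 := two_sin_sq' θ
    have h2 := Real.sin_sq_add_cos_sq θ
    nlinarith
  rw [key, Real.sqrt_sq (by positivity)]

theorem stmt7 (n : ℕ) (hn : 3 ≤ n) (α : ℝ) (hα : 1 ≤ α) (μ : ℝ) :
    let ζ : ℝ := 2 * Real.pi / n
    let a : ℕ → ℂ := fun i => if i = 0 then 0 else Complex.exp (Complex.I * i * ζ)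
    let m : ℕ → ℝ := fun i => if i = 0 then μ else 1
    let s₁ : ℝ := (1 / 2 ^ α) * ∑ j ∈ Finset.Icc 1 (n - 1), 1 / Real.sin (j * ζ / 2) ^ (α - 1)
    let ω : ℝ := μ + s₁
    -- the gradient with respect to the central body vanishes
    (∑ i ∈ Finset.Icc 1 n, a i / ((‖a i‖ ^ (α + 1) : ℝ) : ℂ) = 0) ∧
    -- the gradient with respect to each of the bodies on the polygon vanishes
    ∀ j ∈ Finset.Icc 1 n,
      (ω : ℂ) * a j -
        ∑ i ∈ (Finset.range (n + 1)).erase j,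
          (m i : ℂ) * (a j - a i) / ((‖a j - a i‖ ^ (α + 1) : ℝ) : ℂ) = 0 := by
  intro ζ a m s₁ ω
  have hπ := Real.pi_pos
  have hn0 : (0:ℝ) < n := by exact_mod_cast Nat.lt_of_lt_of_le (by norm_num) hn
  have hn3 : (3:ℝ) ≤ n := by exact_mod_cast hn
  have hζ : 0 < ζ := by positivity
  have haE : ∀ i : ℕ, i ≠ 0 → a i = Eθ (i * ζ) := by
    intro i hi
    simp only [a, if_neg hi, Eθ]
    congr 1
    push_cast
    ring
  have hnζ : (n : ℝ) * ζ = 2 * Real.pi := by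
    show (n:ℝ) * (2 * Real.pi / n) = 2 * Real.pi; rw [mul_div_assoc']; exact mul_div_cancel_left₀ _ hn0.ne'
  have hEn : Eθ ((n : ℝ) * ζ) = 1 := by
    rw [hnζ, Eθ]
    push_cast
    exact Complex.exp_two_pi_mul_I
  have hsin : ∀ k : ℕ, 1 ≤ k → k ≤ n - 1 → 0 < Real.sin (k * ζ / 2) := by
    intro k hk1 hk2
    apply Real.sin_pos_of_pos_of_lt_pi
    · have : (1:ℝ) ≤ (k:ℝ) := by exact_mod_cast hk1
      positivity
    · have hkn : (k : ℝ) < n := by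
        have : k < n := by omega
        exact_mod_cast this
      have heq : (k:ℝ) * ζ / 2 = (k:ℝ) * Real.pi / n := by
        field_simp [ζ]; linear_combination hnζ
      rw [heq, div_lt_iff₀ hn0]
      nlinarith
  have hsplit : Finset.range (n+1) = insert 0 (Finset.Icc 1 n) := by
    ext i; simp only [Finset.mem_range, Finset.mem_insert, Finset.mem_Icc]; omega
  have h0ni : (0:ℕ) ∉ Finset.Icc 1 n := by simp
  -- the generator
  set w : ℂ := Eθ ζ with hw
  have hwn : w ^ n = 1 := by rw [← Eθ_nat_mul]; exact hEn
  have hζπ : ζ < Real.pi := by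
    have : ζ = 2 * Real.pi / n := rfl
    rw [this, div_lt_iff₀ hn0]
    nlinarith
  have hsinζ : 0 < Real.sin ζ := Real.sin_pos_of_pos_of_lt_pi hζ hζπ
  have hwne : w ≠ 1 := by
    intro h
    have him : w.im = Real.sin ζ := Complex.exp_ofReal_mul_I_im ζ
    rw [h] at him
    simp at him
    linarith [him ▸ hsinζ]
  -- part 1 sum
  have hIccSum : ∑ i ∈ Finset.Icc 1 n, w ^ i = 0 := by
    have hgeom : ∑ i ∈ Finset.range (n+1), w ^ i = 1 := by
      rw [geom_sum_eq hwne, pow_succ, hwn, one_mul]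
      exact div_self (sub_ne_zero.mpr hwne)
    rw [hsplit, Finset.sum_insert h0ni, pow_zero] at hgeom
    linear_combination hgeom
  have part1 : ∑ i ∈ Finset.Icc 1 n, a i / ((‖a i‖ ^ (α + 1) : ℝ) : ℂ) = 0 := by
    rw [← hIccSum]
    apply Finset.sum_congr rfl
    intro i hi
    have hi0 : i ≠ 0 := by
      rw [Finset.mem_Icc] at hi; omega
    rw [haE i hi0, Eθ_norm, Real.one_rpow, Complex.ofReal_one, div_one, Eθ_nat_mul]
  refine ⟨part1, ?_⟩
  -- part 2
  intro j hj
  rw [Finset.mem_Icc] at hj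
  have hj0 : j ≠ 0 := by omega
  -- the core sum S
  set S : ℂ := ∑ k ∈ Finset.Icc 1 (n-1),
      (1 - Eθ (k * ζ)) / (((2 * Real.sin (k * ζ / 2)) ^ (α + 1) : ℝ) : ℂ) with hS
  -- reindexing
  have hreindex : ∑ k ∈ Finset.Icc 1 (n-1),
        a j * ((1 - Eθ (k * ζ)) / (((2 * Real.sin (k * ζ / 2)) ^ (α + 1) : ℝ) : ℂ))
      = ∑ i ∈ (Finset.Icc 1 n).erase j,
        (a j - a i) / ((‖a j - a i‖ ^ (α + 1) : ℝ) : ℂ) := by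
    apply Finset.sum_nbij' (i := fun k => if j + k ≤ n then j + k else j + k - n)
      (j := fun i => if j < i then i - j else i + n - j)
    · intro k hk
      rw [Finset.mem_Icc] at hk
      rw [Finset.mem_erase, Finset.mem_Icc]
      split <;> omega
    · intro i hi
      rw [Finset.mem_erase, Finset.mem_Icc] at hi
      rw [Finset.mem_Icc]
      split <;> omega
    · intro k hk
      rw [Finset.mem_Icc] at hk
      split <;> split <;> omega
    · intro i hi
      rw [Finset.mem_erase, Finset.mem_Icc] at hi
      split <;> split <;> omega
    · intro k hk
      rw [Finset.mem_Icc] at hk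
      have hφ0 : (if j + k ≤ n then j + k else j + k - n) ≠ 0 := by split <;> omega
      have haφ : a (if j + k ≤ n then j + k else j + k - n) = Eθ (j * ζ) * Eθ (k * ζ) := by
        by_cases h : j + k ≤ n
        · rw [if_pos h, haE _ (by omega), ← Eθ_add]
          congr 1; push_cast; ring
        · rw [if_neg h, haE _ (by omega), ← Eθ_add]
          have hcast : (((j + k - n : ℕ)) : ℝ) = (j : ℝ) + k - n := by
            push_cast [Nat.cast_sub (by omega : n ≤ j + k)]; ring
          have heq2 : ((j + k - n : ℕ) : ℝ) * ζ + (n : ℝ) * ζ = (j:ℝ) * ζ + (k:ℝ) * ζ := by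
            rw [hcast]; ring
          calc Eθ (((j + k - n : ℕ) : ℝ) * ζ)
              = Eθ (((j + k - n : ℕ) : ℝ) * ζ) * Eθ ((n:ℝ) * ζ) := by rw [hEn, mul_one]
            _ = Eθ (((j + k - n : ℕ) : ℝ) * ζ + (n:ℝ) * ζ) := (Eθ_add _ _).symm
            _ = Eθ ((j:ℝ) * ζ + (k:ℝ) * ζ) := by rw [heq2]
      have hsub : a j - a (if j + k ≤ n then j + k else j + k - n)
          = Eθ (j * ζ) * (1 - Eθ (k * ζ)) := by
        rw [haE j hj0, haφ]; ring
      have hnorm : ‖a j - a (if j + k ≤ n then j + k else j + k - n)‖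
          = 2 * Real.sin (k * ζ / 2) := by
        rw [hsub, norm_mul, Eθ_norm, one_mul]
        exact norm_one_sub_Eθ _ (hsin k hk.1 hk.2).le
      rw [hnorm, hsub, haE j hj0]
      ring
  -- S = s₁
  have hSeq : S = (s₁ : ℂ) := by
    have hterm : ∀ k ∈ Finset.Icc 1 (n-1),
        (1 - Eθ (k * ζ)) / (((2 * Real.sin (k * ζ / 2)) ^ (α + 1) : ℝ) : ℂ)
        = (((1 - Real.cos (k * ζ)) / (2 * Real.sin (k * ζ / 2)) ^ (α + 1) : ℝ) : ℂ)
          + (((-Real.sin (k * ζ)) / (2 * Real.sin (k * ζ / 2)) ^ (α + 1) : ℝ) : ℂ) * Complex.I := by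
      intro k hk
      rw [one_sub_Eθ]
      push_cast
      ring
    rw [hS, Finset.sum_congr rfl hterm, Finset.sum_add_distrib, ← Finset.sum_mul,
      ← Complex.ofReal_sum, ← Complex.ofReal_sum]
    have hB : ∑ k ∈ Finset.Icc 1 (n-1),
        (-Real.sin (k * ζ)) / (2 * Real.sin (k * ζ / 2)) ^ (α + 1) = 0 := by
      apply Finset.sum_involution (g := fun k _ => n - k)
      · intro k hk
        rw [Finset.mem_Icc] at hk
        have hcast : ((n - k : ℕ) : ℝ) = (n : ℝ) - k := by
          push_cast [Nat.cast_sub (by omega : k ≤ n)]; ring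
        have h1 : Real.sin (((n - k : ℕ) : ℝ) * ζ) = -Real.sin ((k:ℝ) * ζ) := by
          rw [hcast]
          have : ((n:ℝ) - k) * ζ = -((k:ℝ) * ζ) + 2 * Real.pi := by
            rw [sub_mul, hnζ]; ring
          rw [this, Real.sin_add_two_pi, Real.sin_neg]
        have h2 : Real.sin (((n - k : ℕ) : ℝ) * ζ / 2) = Real.sin ((k:ℝ) * ζ / 2) := by
          rw [hcast]
          have : ((n:ℝ) - k) * ζ / 2 = Real.pi - (k:ℝ) * ζ / 2 := by
            rw [sub_mul]; rw [hnζ]; ring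
          rw [this, Real.sin_pi_sub]
        rw [h1, h2]
        ring
      · intro k hk hfk
        rw [Finset.mem_Icc] at hk
        intro hgk
        apply hfk
        have h2k : n = 2 * k := by omega
        have : (k : ℝ) * ζ = Real.pi := by
          have : (n : ℝ) = 2 * k := by exact_mod_cast h2k
          field_simp [ζ] at this ⊢
          nlinarith [hnζ, this]
        rw [this, Real.sin_pi]
        simp
      · intro k hk
        rw [Finset.mem_Icc] at hk ⊢
        omega
      · intro k hk
        rw [Finset.mem_Icc] at hk
        omega
    have hA : ∑ k ∈ Finset.Icc 1 (n-1),
        (1 - Real.cos (k * ζ)) / (2 * Real.sin (k * ζ / 2)) ^ (α + 1) = s₁ := by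
      rw [show s₁ = (1 / 2 ^ α) * ∑ j ∈ Finset.Icc 1 (n - 1), 1 / Real.sin (j * ζ / 2) ^ (α - 1) from rfl,
        Finset.mul_sum]
      apply Finset.sum_congr rfl
      intro k hk
      rw [Finset.mem_Icc] at hk
      have hs := hsin k hk.1 hk.2
      set s := Real.sin ((k:ℝ) * ζ / 2) with hsdef
      have hX : (0:ℝ) < s ^ (α - 1) := Real.rpow_pos_of_pos hs _
      have h2α : (0:ℝ) < (2:ℝ) ^ α := Real.rpow_pos_of_pos (by norm_num) _
      have hcos : 1 - Real.cos ((k:ℝ) * ζ) = 2 * s ^ 2 := two_sin_sq' _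
      have hD : (2 * s) ^ (α + 1) = (2:ℝ) ^ α * 2 * (s ^ (α - 1) * s ^ 2) := by
        rw [Real.mul_rpow (by norm_num) hs.le]
        have e1 : (2:ℝ) ^ (α + 1) = (2:ℝ) ^ α * 2 := by
          rw [Real.rpow_add (by norm_num), Real.rpow_one]
        have e2 : s ^ (α + 1) = s ^ (α - 1) * s ^ 2 := by
          rw [← Real.rpow_natCast s 2, ← Real.rpow_add hs]
          congr 1
          push_cast
          ring
        rw [e1, e2]
      rw [hcos, hD]
      field_simp
    rw [hA, hB]
    simp
  -- assemble part 2
  have herase : (Finset.range (n+1)).erase j = insert 0 ((Finset.Icc 1 n).erase j) := by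
    ext i
    simp only [Finset.mem_erase, Finset.mem_range, Finset.mem_insert, Finset.mem_Icc]
    omega
  have h0ne : (0:ℕ) ∉ (Finset.Icc 1 n).erase j := by simp
  rw [herase, Finset.sum_insert h0ne]
  have hterm0 : (m 0 : ℂ) * (a j - a 0) / ((‖a j - a 0‖ ^ (α + 1) : ℝ) : ℂ) = (μ:ℂ) * a j := by
    have ha0 : a 0 = 0 := by simp [a]
    have hm0 : m 0 = μ := by simp [m]
    rw [ha0, hm0, sub_zero, haE j hj0, Eθ_norm, Real.one_rpow, Complex.ofReal_one, div_one]
  have hrest : ∑ i ∈ (Finset.Icc 1 n).erase j,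
      (m i : ℂ) * (a j - a i) / ((‖a j - a i‖ ^ (α + 1) : ℝ) : ℂ)
      = a j * S := by
    rw [hS, Finset.mul_sum, hreindex]
    apply Finset.sum_congr rfl
    intro i hi
    rw [Finset.mem_erase, Finset.mem_Icc] at hi
    have : m i = 1 := by simp [m]; omega
    rw [this]
    push_cast
    ring
  rw [hterm0, hrest, hSeq]
  have : (ω : ℂ) = (μ : ℂ) + (s₁ : ℂ) := by push_cast [ω]; ring
  rw [this]
  ring
end

section
/- For integers n ≥ 2 and 0 ≤ k ≤ n, with ζ = 2π/n: Σ_{j=1}^{n-1} sin²(kjζ/2)/sin²(jζ/2) = k(n - k). Equivalently, for α = 1, the sum s_k := (1/2) Σ_{j=1}^{n-1} sin²(kjζ/2)/sin²(jζ/2) equals k(n-k)/2. -/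
open Finset Complex

lemma abs_sq_exp_sub_one (φ : ℝ) :
    ‖Complex.exp (2 * φ * Complex.I) - 1‖ ^ 2 = 4 * Real.sin φ ^ 2 := by
  rw [Complex.sq_norm, Complex.normSq_apply]
  simp [Complex.exp_re, Complex.exp_im, Complex.sub_re, Complex.sub_im]
  have h2 := Real.cos_two_mul φ
  have h3 := Real.sin_sq_add_cos_sq φ
  have h1 := Real.sin_sq_add_cos_sq (2*φ)
  nlinarith [h1, h2, h3]

lemma keyA (θ : ℝ) (k : ℕ) :
    ‖∑ m ∈ range k, Complex.exp (2 * m * θ * Complex.I)‖ ^ 2 * Real.sin θ ^ 2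
      = Real.sin (k * θ) ^ 2 := by
  have hx : ∀ m : ℕ, Complex.exp (2 * (m:ℂ) * (θ:ℂ) * Complex.I)
      = (Complex.exp (2 * (θ:ℂ) * Complex.I)) ^ m := by
    intro m
    rw [← Complex.exp_nat_mul]
    ring_nf
  have geom := geom_sum_mul (Complex.exp (2 * (θ:ℂ) * Complex.I)) k
  have habs := congrArg (fun z => ‖z‖ ^ 2) geom
  simp only [norm_mul, mul_pow] at habs
  have hk : (Complex.exp (2 * (θ:ℂ) * Complex.I)) ^ k = Complex.exp (2 * ((k:ℝ)*θ : ℝ) * Complex.I) := by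
    rw [← Complex.exp_nat_mul]; push_cast; ring_nf
  rw [hk] at habs
  rw [abs_sq_exp_sub_one ((k:ℝ)*θ), abs_sq_exp_sub_one θ] at habs
  simp only [hx] at habs ⊢
  nlinarith [habs]

lemma keyB (n : ℕ) (hn : 2 ≤ n) (k : ℕ) (hk : k ≤ n) :
    ∑ j ∈ range n, (‖∑ m ∈ range k,
        Complex.exp (2 * m * ((j : ℝ) * Real.pi / n) * Complex.I)‖ ^ 2 : ℝ)
      = n * k := by
  have hn0 : (n:ℂ) ≠ 0 := Nat.cast_ne_zero.mpr (by omega)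
  set ζ : ℂ := Complex.exp (2 * Real.pi * Complex.I / n) with hζ
  have hprim : IsPrimitiveRoot ζ n := Complex.isPrimitiveRoot_exp n (by omega)
  have hζ0 : ζ ≠ 0 := Complex.exp_ne_zero _
  have hζn : ζ ^ n = 1 := hprim.pow_eq_one
  have hinvn : (ζ⁻¹) ^ n = 1 := by rw [inv_pow, hζn, inv_one]
  have hterm : ∀ j m : ℕ, Complex.exp (2 * (m:ℂ) * (((j : ℝ) * Real.pi / n : ℝ) : ℂ) * Complex.I)
      = ζ ^ (j * m) := by
    intro j m
    rw [hζ, ← Complex.exp_nat_mul]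
    congr 1
    push_cast
    field_simp
  have hconj : ∀ j : ℕ, (starRingEnd ℂ) (∑ m ∈ range k, ζ ^ (j * m))
      = ∑ m ∈ range k, (ζ⁻¹) ^ (j * m) := by
    intro j
    rw [map_sum]
    refine sum_congr rfl fun m _ => ?_
    rw [map_pow]
    congr 1
    rw [hζ, ← Complex.exp_conj, ← Complex.exp_neg]
    congr 1
    simp [Complex.conj_I, map_ofNat]
    ring
  have hw : ∀ m ∈ range k, ∀ m' ∈ range k,
      ∑ j ∈ range n, (ζ ^ m * (ζ⁻¹) ^ m') ^ j = if m = m' then (n:ℂ) else 0 := by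
    intro m hm m' hm'
    by_cases h : m = m'
    · subst h
      simp only [if_pos rfl, inv_pow, mul_inv_cancel₀ (pow_ne_zero m hζ0), one_pow,
        sum_const, card_range, nsmul_eq_mul, mul_one]
      simp
    · rw [if_neg h]
      have hw1 : ζ ^ m * (ζ⁻¹) ^ m' ≠ 1 := by
        rw [inv_pow, Ne, mul_inv_eq_one₀ (pow_ne_zero m' hζ0)]
        intro hcon
        exact h (hprim.pow_inj (lt_of_lt_of_le (mem_range.mp hm) hk)
          (lt_of_lt_of_le (mem_range.mp hm') hk) hcon)
      have hwn : (ζ ^ m * (ζ⁻¹) ^ m') ^ n = 1 := by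
        rw [mul_pow, pow_right_comm, pow_right_comm ζ⁻¹, hζn, hinvn, one_pow, one_pow, mul_one]
      rw [geom_sum_eq hw1, hwn]
      simp
  have habs2 : ∀ z : ℂ, ((‖z‖ ^ 2 : ℝ) : ℂ) = z * (starRingEnd ℂ) z := by
    intro z; rw [Complex.sq_norm, Complex.mul_conj]
  have hC : ((∑ j ∈ range n, (‖∑ m ∈ range k,
        Complex.exp (2 * m * ((j : ℝ) * Real.pi / n) * Complex.I)‖ ^ 2 : ℝ) : ℝ) : ℂ)
      = (n : ℂ) * k := by
    rw [Complex.ofReal_sum]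
    calc ∑ j ∈ range n, ((‖∑ m ∈ range k,
            Complex.exp (2 * m * ((j : ℝ) * Real.pi / n) * Complex.I)‖ ^ 2 : ℝ) : ℂ)
        = ∑ j ∈ range n, ∑ m ∈ range k, ∑ m' ∈ range k, (ζ ^ m * (ζ⁻¹) ^ m') ^ j := by
          refine sum_congr rfl fun j _ => ?_
          rw [habs2]
          have h1 : (∑ m ∈ range k, Complex.exp (2 * (m:ℂ) * (((j:ℝ):ℂ) * ((Real.pi:ℝ):ℂ) / ((n:ℕ):ℂ)) * Complex.I))
              = ∑ m ∈ range k, ζ ^ (j * m) := by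
            refine sum_congr rfl fun m _ => ?_
            rw [← hterm j m]
            congr 2
            push_cast
            ring
          rw [h1, hconj, Finset.sum_mul_sum]
          refine sum_congr rfl fun m _ => sum_congr rfl fun m' _ => ?_
          rw [mul_pow, ← pow_mul, ← pow_mul, mul_comm j m, mul_comm j m']
      _ = ∑ m ∈ range k, ∑ m' ∈ range k, ∑ j ∈ range n, (ζ ^ m * (ζ⁻¹) ^ m') ^ j := by
          rw [Finset.sum_comm]
          exact sum_congr rfl fun m _ => Finset.sum_comm
      _ = ∑ m ∈ range k, ∑ m' ∈ range k, if m = m' then (n:ℂ) else 0 :=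
          sum_congr rfl fun m hm => sum_congr rfl fun m' hm' => hw m hm m' hm'
      _ = (n : ℂ) * k := by
          rw [Finset.sum_congr rfl (fun m hm => Finset.sum_ite_eq (range k) m (fun _ => (n:ℂ)))]
          rw [Finset.sum_congr rfl (fun m hm => if_pos hm), sum_const, card_range,
            nsmul_eq_mul, mul_comm]
  exact_mod_cast hC

theorem stmt11 (n : ℕ) (hn : 2 ≤ n) (k : ℕ) (hk : k ≤ n) :
    (∑ j ∈ Finset.Icc 1 (n - 1),
        Real.sin (k * j * (2 * Real.pi / n) / 2) ^ 2 /
          Real.sin (j * (2 * Real.pi / n) / 2) ^ 2)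
      = (k : ℝ) * ((n : ℝ) - k) := by
  have hn0 : (n:ℝ) ≠ 0 := Nat.cast_ne_zero.mpr (by omega)
  have hsin : ∀ j ∈ Finset.Icc 1 (n-1), Real.sin ((j:ℝ) * Real.pi / n) ≠ 0 := by
    intro j hj
    obtain ⟨h1, h2⟩ := Finset.mem_Icc.mp hj
    have hj1 : (1:ℝ) ≤ j := by exact_mod_cast h1
    have hj2 : (j:ℝ) < n := by exact_mod_cast (by omega : j < n)
    have hnpos : (0:ℝ) < n := by positivity
    have hpos : 0 < (j:ℝ) * Real.pi / n := by positivity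
    have hlt : (j:ℝ) * Real.pi / n < Real.pi := by
      rw [div_lt_iff₀ hnpos]
      nlinarith [Real.pi_pos]
    exact ne_of_gt (Real.sin_pos_of_pos_of_lt_pi hpos hlt)
  have hstep : ∀ j ∈ Finset.Icc 1 (n-1),
      Real.sin (k * j * (2 * Real.pi / n) / 2) ^ 2 /
          Real.sin (j * (2 * Real.pi / n) / 2) ^ 2
        = ‖∑ m ∈ range k,
            Complex.exp (2 * m * ((j : ℝ) * Real.pi / n) * Complex.I)‖ ^ 2 := by
    intro j hj
    have h1 : (j:ℝ) * (2*Real.pi/n)/2 = (j:ℝ) * Real.pi / n := by ring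
    have h2 : (k:ℝ) * (j:ℝ) * (2*Real.pi/n)/2 = (k:ℝ) * ((j:ℝ) * Real.pi / n) := by ring
    rw [h1, h2]
    have hA := keyA ((j:ℝ) * Real.pi / n) k
    have hs := hsin j hj
    have hbridge : (∑ m ∈ range k, Complex.exp (2 * (m:ℂ) * ((((j:ℝ) * Real.pi / n : ℝ)) : ℂ) * Complex.I))
        = ∑ m ∈ range k, Complex.exp (2 * (m:ℂ) * (((j:ℝ):ℂ) * ((Real.pi:ℝ):ℂ) / ((n:ℕ):ℂ)) * Complex.I) := by
      refine sum_congr rfl fun m _ => ?_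
      congr 2
      push_cast
      ring
    rw [hbridge] at hA
    rw [eq_comm, ← hA]
    field_simp
    congr 2
    refine sum_congr rfl fun m _ => ?_
    congr 1
    ring
  rw [Finset.sum_congr rfl hstep]
  have hIcc : Finset.Icc 1 (n-1) = Finset.Ico 1 n := by
    rw [← Finset.Ico_add_one_right_eq_Icc]
    congr 1
    omega
  have hrange := keyB n hn k hk
  rw [Finset.range_eq_Ico, Finset.sum_eq_sum_Ico_succ_bot (by omega : 0 < n)] at hrange
  simp only [Finset.range_eq_Ico, zero_add] at hrange ⊢
  have hg0 : ‖∑ m ∈ range k,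
      Complex.exp (2 * m * (((0:ℕ) : ℝ) * Real.pi / n) * Complex.I)‖ ^ 2 = (k:ℝ)^2 := by
    simp
  simp only [Finset.range_eq_Ico] at hg0
  rw [hg0] at hrange
  rw [hIcc]
  linear_combination hrange
end
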